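/- Let μ > 0, Λ ∈ ℝ, and let h : ℝ → ℝ be of class C⁴. Define w : ℝ² → ℝ by w(x,y) = h(y)·cos(√μ · x). Then w satisfies Δ²w(x,y) = −Λ Δw(x,y) for all (x,y) ∈ ℝ² if and only if h satisfies (h'' − μh)''(y) = −(Λ − μ)(h''(y) − μh(y)) for all y ∈ ℝ, where Δ is the Laplacian on ℝ² and Δ² the bilaplacian. -/

import Mathlib

open Real

/-- The Laplacian of `u : ℝⁿ → ℝ` at `x`, as the trace of the second derivative. -/
noncomputable def lapl {n : ℕ} (u : EuclideanSpace ℝ (Fin n) → ℝ)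
    (x : EuclideanSpace ℝ (Fin n)) : ℝ :=
  ∑ i : Fin n, iteratedFDeriv ℝ 2 u x ![EuclideanSpace.single i (1:ℝ), EuclideanSpace.single i 1]


section Aux

abbrev E2 := EuclideanSpace ℝ (Fin 2)

noncomputable def pr (i : Fin 2) : E2 →L[ℝ] ℝ := EuclideanSpace.proj i

lemma diffat_sep (f g : ℝ → ℝ) (hf : Differentiable ℝ f) (hg : Differentiable ℝ g)
    (q : E2) : DifferentiableAt ℝ (fun q : E2 => f (q 1) * g (q 0)) q := by
  have h1 : DifferentiableAt ℝ (fun q : E2 => f (q 1)) q :=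
    (hf (q 1)).comp q (pr 1).differentiableAt
  have h2 : DifferentiableAt ℝ (fun q : E2 => g (q 0)) q :=
    (hg (q 0)).comp q (pr 0).differentiableAt
  exact h1.mul h2

lemma contdiff_sep (f g : ℝ → ℝ) {n : ℕ∞} (hf : ContDiff ℝ n f) (hg : ContDiff ℝ n g) :
    ContDiff ℝ n (fun q : E2 => f (q 1) * g (q 0)) :=
  (hf.comp (pr 1).contDiff).mul (hg.comp (pr 0).contDiff)

lemma fderiv_sep (f g : ℝ → ℝ) (hf : Differentiable ℝ f) (hg : Differentiable ℝ g)
    (q v : E2) :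
    fderiv ℝ (fun q : E2 => f (q 1) * g (q 0)) q v
      = deriv f (q 1) * v 1 * g (q 0) + f (q 1) * (deriv g (q 0) * v 0) := by
  have h1 : HasFDerivAt (fun q : E2 => f (q 1))
      ((ContinuousLinearMap.smulRight (1 : ℝ →L[ℝ] ℝ) (deriv f (q 1))).comp (pr 1)) q :=
    ((hf (q 1)).hasDerivAt.hasFDerivAt).comp q (pr 1).hasFDerivAt
  have h2 : HasFDerivAt (fun q : E2 => g (q 0))
      ((ContinuousLinearMap.smulRight (1 : ℝ →L[ℝ] ℝ) (deriv g (q 0))).comp (pr 0)) q :=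
    ((hg (q 0)).hasDerivAt.hasFDerivAt).comp q (pr 0).hasFDerivAt
  rw [HasFDerivAt.fderiv (f := fun q : E2 => f (q 1) * g (q 0)) (h1.mul h2)]
  simp [pr, ContinuousLinearMap.smulRight_apply]
  ring

lemma lapl_sep (f g : ℝ → ℝ) (hf : ContDiff ℝ 2 f) (hg : ContDiff ℝ 2 g) (p : E2) :
    lapl (fun q : E2 => f (q 1) * g (q 0)) p
      = deriv (deriv f) (p 1) * g (p 0) + f (p 1) * deriv (deriv g) (p 0) := by
  have one_le_two' : (1:WithTop ℕ∞) ≤ 2 := by norm_num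
  have hf1 : Differentiable ℝ f := hf.differentiable (by norm_num)
  have hg1 : Differentiable ℝ g := hg.differentiable (by norm_num)
  have hf' : Differentiable ℝ (deriv f) := by
    have h2 : ContDiff ℝ ((1:ℕ) + (1:ℕ) : ℕ) f := by exact_mod_cast hf
    have := ContDiff.iterate_deriv' 1 1 h2
    simpa using this.differentiable (by norm_num)
  have hg' : Differentiable ℝ (deriv g) := by
    have h2 : ContDiff ℝ ((1:ℕ) + (1:ℕ) : ℕ) g := by exact_mod_cast hg
    have := ContDiff.iterate_deriv' 1 1 h2
    simpa using this.differentiable (by norm_num)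
  have hW : ContDiff ℝ 2 (fun q : E2 => f (q 1) * g (q 0)) := contdiff_sep f g hf hg
  have hW' : Differentiable ℝ (fderiv ℝ (fun q : E2 => f (q 1) * g (q 0))) :=
    (hW.fderiv_right (m := 1) (by norm_num)).differentiable (by norm_num)
  have key : ∀ v p' : E2,
      fderiv ℝ (fderiv ℝ (fun q : E2 => f (q 1) * g (q 0))) p' v v
        = fderiv ℝ (fun q : E2 => fderiv ℝ (fun q : E2 => f (q 1) * g (q 0)) q v) p' v := by
    intro v p'
    rw [fderiv_clm_apply (hW' p') (differentiableAt_const v)]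
    simp
  unfold lapl
  rw [Fin.sum_univ_two]
  rw [iteratedFDeriv_two_apply, iteratedFDeriv_two_apply]
  simp only [Matrix.cons_val_zero, Matrix.cons_val_one, Matrix.head_cons]
  rw [key, key]
  have e0 : (fun q : E2 => fderiv ℝ (fun q : E2 => f (q 1) * g (q 0)) q
      (EuclideanSpace.single (0:Fin 2) (1:ℝ))) = fun q : E2 => f (q 1) * deriv g (q 0) := by
    funext q
    rw [fderiv_sep f g hf1 hg1]
    simp [EuclideanSpace.single_apply]
  have e1 : (fun q : E2 => fderiv ℝ (fun q : E2 => f (q 1) * g (q 0)) q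
      (EuclideanSpace.single (1:Fin 2) (1:ℝ))) = fun q : E2 => deriv f (q 1) * g (q 0) := by
    funext q
    rw [fderiv_sep f g hf1 hg1]
    simp [EuclideanSpace.single_apply]
  rw [e0, e1, fderiv_sep f (deriv g) hf1 hg', fderiv_sep (deriv f) g hf' hg1]
  simp [EuclideanSpace.single_apply]
  ring

end Aux

section Main

variable {μ Λ : ℝ}

lemma cosDeriv (μ : ℝ) : deriv (fun t => Real.cos (Real.sqrt μ * t))
    = fun t => -(Real.sqrt μ * Real.sin (Real.sqrt μ * t)) := by
  funext t
  have h1 : HasDerivAt (fun t : ℝ => Real.sqrt μ * t) (Real.sqrt μ) t := by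
    simpa using (hasDerivAt_id t).const_mul (Real.sqrt μ)
  have h2 : HasDerivAt (fun t => Real.cos (Real.sqrt μ * t))
      (-Real.sin (Real.sqrt μ * t) * Real.sqrt μ) t := by
    simpa [Function.comp_def] using (Real.hasDerivAt_cos (Real.sqrt μ * t)).comp t h1
  rw [h2.deriv]; ring

lemma cosDeriv2 (μ : ℝ) (hμ : 0 ≤ μ) :
    deriv (deriv (fun t => Real.cos (Real.sqrt μ * t)))
    = fun t => -(μ * Real.cos (Real.sqrt μ * t)) := by
  rw [cosDeriv]
  funext t
  have h1 : HasDerivAt (fun t : ℝ => Real.sqrt μ * t) (Real.sqrt μ) t := by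
    simpa using (hasDerivAt_id t).const_mul (Real.sqrt μ)
  have h2 : HasDerivAt (fun t => Real.sin (Real.sqrt μ * t))
      (Real.cos (Real.sqrt μ * t) * Real.sqrt μ) t := by
    simpa [Function.comp_def] using (Real.hasDerivAt_sin (Real.sqrt μ * t)).comp t h1
  have h3 : HasDerivAt (fun t => -(Real.sqrt μ * Real.sin (Real.sqrt μ * t)))
      (-(Real.sqrt μ * (Real.cos (Real.sqrt μ * t) * Real.sqrt μ))) t := (h2.const_mul _).neg
  rw [h3.deriv]
  have h4 : Real.sqrt μ * Real.sqrt μ = μ := Real.mul_self_sqrt hμ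
  rw [show Real.sqrt μ * (Real.cos (Real.sqrt μ * t) * Real.sqrt μ)
      = (Real.sqrt μ * Real.sqrt μ) * Real.cos (Real.sqrt μ * t) by ring, h4]

lemma cosCD (μ : ℝ) : ContDiff ℝ 2 (fun t => Real.cos (Real.sqrt μ * t)) :=
  Real.contDiff_cos.comp ((contDiff_const).mul contDiff_id)

end Main

/-- For `μ > 0` and a `C⁴` function `h`, the separated function `w(x,y) = h(y)cos(√μ x)`
satisfies `Δ²w = −Λ Δw` on `ℝ²` if and only if `h` satisfies
`(h'' − μh)'' = −(Λ − μ)(h'' − μh)` on `ℝ`. -/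
theorem separation_of_variables (μ : ℝ) (hμ : 0 < μ) (Λ : ℝ) (h : ℝ → ℝ)
    (hh : ContDiff ℝ 4 h) :
    (∀ p : EuclideanSpace ℝ (Fin 2),
        lapl (lapl fun q : EuclideanSpace ℝ (Fin 2) => h (q 1) * Real.cos (Real.sqrt μ * q 0))
            p =
          -Λ * lapl (fun q : EuclideanSpace ℝ (Fin 2) =>
            h (q 1) * Real.cos (Real.sqrt μ * q 0)) p) ↔
    (∀ y : ℝ, deriv^[2] (fun t => deriv^[2] h t - μ * h t) y =
        -(Λ - μ) * (deriv^[2] h y - μ * h y)) := by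
  set g : ℝ → ℝ := fun t => Real.cos (Real.sqrt μ * t) with hgdef
  have hh2 : ContDiff ℝ 2 h := hh.of_le (by norm_num)
  have hh2' : ContDiff ℝ 2 (deriv (deriv h)) := by
    have h4 : ContDiff ℝ ((2:ℕ) + (2:ℕ) : ℕ) h := by exact_mod_cast hh
    have := ContDiff.iterate_deriv' 2 2 h4
    exact_mod_cast this
  set F : ℝ → ℝ := fun t => deriv (deriv h) t - μ * h t with hFdef
  have hF : ContDiff ℝ 2 F := hh2'.sub (contDiff_const.mul hh2)
  have L1 : (lapl fun q : EuclideanSpace ℝ (Fin 2) => h (q 1) * Real.cos (Real.sqrt μ * q 0))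
      = fun p : E2 => F (p 1) * g (p 0) := by
    funext p
    have := lapl_sep h g hh2 (cosCD μ) p
    rw [cosDeriv2 μ hμ.le] at this
    rw [this]
    simp only [hFdef, hgdef]
    ring
  have L2 : ∀ p : E2, lapl (fun q : E2 => F (q 1) * g (q 0)) p
      = (deriv (deriv F) (p 1) - μ * F (p 1)) * g (p 0) := by
    intro p
    have := lapl_sep F g hF (cosCD μ) p
    rw [cosDeriv2 μ hμ.le] at this
    rw [this]; ring
  constructor
  · intro H y
    set p : E2 := (EuclideanSpace.equiv (Fin 2) ℝ).symm ![0, y] with hp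
    have hp0 : p 0 = 0 := rfl
    have hp1 : p 1 = y := rfl
    have := H p
    rw [L1, L2 p] at this
    beta_reduce at this
    rw [hp0, hp1] at this
    simp only [hgdef, mul_zero, Real.cos_zero, mul_one] at this
    show deriv (deriv F) y = -(Λ - μ) * F y
    linarith
  · intro H p
    rw [L1, L2 p]
    beta_reduce
    have hy := H (p 1)
    have hy' : deriv (deriv F) (p 1) = -(Λ - μ) * F (p 1) := hy
    rw [hy']
    ring
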